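/- If G is connected, H is the disjoint union H' + H'' of two nonempty graphs, and G is CR-similar to H, then G is CR-similar to H' and to H''. -/

import Mathlib

/-- The type of colors at round `r` of color refinement. -/
def CType : ℕ → Type
  | 0 => Unit
  | r + 1 => Multiset (CType r)

/-- The color of vertex `x` after `r` rounds of color refinement on `G`. -/
noncomputable def crColor {V : Type*} [Fintype V] (G : SimpleGraph V) :
    (r : ℕ) → V → CType r
  | 0, _ => ()
  | r + 1, x => ((G.neighborSet x).toFinite.toFinset).val.map (crColor G r)

/-- The full color-refinement color sequence of a vertex. -/
noncomputable def crSeq {V : Type*} [Fintype V] (G : SimpleGraph V) (x : V) :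
    (r : ℕ) → CType r :=
  fun r => crColor G r x

/-- The set of full color sequences arising at vertices of `G`. -/
noncomputable def crSet {V : Type*} [Fintype V] (G : SimpleGraph V) :
    Set ((r : ℕ) → CType r) :=
  Set.range (crSeq G)

/-- Projection from round `r+1` colors to round `r` colors. -/
def ctProj : (r : ℕ) → CType (r + 1) → CType r
  | 0, _ => ()
  | r + 1, m => Multiset.map (ctProj r) m

lemma ctProj_crColor {V : Type*} [Fintype V] (G : SimpleGraph V) :
    ∀ (r : ℕ) (x : V), ctProj r (crColor G (r + 1) x) = crColor G r x := by
  intro r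
  induction r with
  | zero => intro x; rfl
  | succ r ih =>
      intro x
      show Multiset.map (ctProj r) _ = _
      simp only [crColor, Multiset.map_map, Function.comp]
      refine (Multiset.map_map _ _ _).trans (Multiset.map_congr rfl fun y _ => ?_)
      exact ih y

lemma crColor_of_le {V W : Type*} [Fintype V] [Fintype W]
    (G : SimpleGraph V) (H : SimpleGraph W) {x : V} {u : W} {r r' : ℕ}
    (h : r ≤ r') (he : crColor G r' x = crColor H r' u) :
    crColor G r x = crColor H r u := by
  induction r' with
  | zero => obtain rfl := Nat.le_zero.mp h; exact he
  | succ n ih =>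
      rcases Nat.lt_succ_iff_lt_or_eq.mp (Nat.lt_succ_of_le h) with h' | rfl
      · apply ih (Nat.lt_succ_iff.mp h')
        have := congrArg (ctProj n) he
        rwa [ctProj_crColor, ctProj_crColor] at this
      · exact he

/-- Neighbor transfer: adjacency is reflected among vertices with equal sequences. -/
lemma neighbor_transfer {V W : Type*} [Fintype V] [Fintype W]
    (G : SimpleGraph V) (H : SimpleGraph W) {x y : V} {u : W}
    (hxy : G.Adj x y) (hseq : crSeq G x = crSeq H u) :
    ∃ v : W, H.Adj u v ∧ crSeq G y = crSeq H v := by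
  have key : ∀ r : ℕ, ∃ v ∈ (H.neighborSet u).toFinite.toFinset,
      crColor H r v = crColor G r y := by
    intro r
    have hcol : crColor G (r + 1) x = crColor H (r + 1) u := congrFun hseq (r + 1)
    have hmem : crColor G r y ∈
        Multiset.map (crColor G r) ((G.neighborSet x).toFinite.toFinset).val := by
      apply Multiset.mem_map_of_mem
      rw [Finset.mem_val, Set.Finite.mem_toFinset]
      exact hxy
    rw [show Multiset.map (crColor G r) ((G.neighborSet x).toFinite.toFinset).val
        = crColor G (r+1) x from rfl, hcol] at hmem
    obtain ⟨v, hv, hveq⟩ := Multiset.mem_map.mp hmem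
    exact ⟨v, hv, hveq⟩
  classical
  choose f hf hfc using key
  -- pigeonhole: some neighbor is chosen infinitely often
  obtain ⟨v, hv⟩ := Finite.exists_infinite_fiber f
  have hinf : {r : ℕ | f r = v}.Infinite := Set.infinite_coe_iff.mp hv
  have hvall : ∀ r : ℕ, crColor H r v = crColor G r y := by
    intro r
    obtain ⟨r', hr', hlt⟩ := hinf.exists_gt r
    have : crColor H r' v = crColor G r' y := hr' ▸ hfc r'
    exact crColor_of_le H G hlt.le this
  have hadj : H.Adj u v := by
    obtain ⟨r0, hr0⟩ := hinf.nonempty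
    have := hf r0
    rw [Set.Finite.mem_toFinset] at this
    rwa [show f r0 = v from hr0] at this
  exact ⟨v, hadj, funext fun r => (hvall r).symm⟩

lemma crColor_sum_inl {V₁ V₂ : Type*} [Fintype V₁] [Fintype V₂]
    (H' : SimpleGraph V₁) (H'' : SimpleGraph V₂) :
    ∀ (r : ℕ) (x : V₁), crColor (H' ⊕g H'') r (Sum.inl x) = crColor H' r x := by
  intro r
  induction r with
  | zero => intro x; rfl
  | succ r ih =>
      intro x
      show Multiset.map _ _ = Multiset.map _ _
      have hfin : ((H' ⊕g H'').neighborSet (Sum.inl x)).toFinite.toFinset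
          = ((H'.neighborSet x).toFinite.toFinset).map
              ⟨Sum.inl, Sum.inl_injective⟩ := by
        ext z
        cases z with
        | inl a => simp [Set.Finite.mem_toFinset, SimpleGraph.neighborSet]
        | inr b => simp [Set.Finite.mem_toFinset, SimpleGraph.neighborSet]
      rw [hfin, Finset.map_val, Multiset.map_map]
      exact Multiset.map_congr rfl fun y _ => ih y

lemma crColor_sum_inr {V₁ V₂ : Type*} [Fintype V₁] [Fintype V₂]
    (H' : SimpleGraph V₁) (H'' : SimpleGraph V₂) :
    ∀ (r : ℕ) (x : V₂), crColor (H' ⊕g H'') r (Sum.inr x) = crColor H'' r x := by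
  intro r
  induction r with
  | zero => intro x; rfl
  | succ r ih =>
      intro x
      show Multiset.map _ _ = Multiset.map _ _
      have hfin : ((H' ⊕g H'').neighborSet (Sum.inr x)).toFinite.toFinset
          = ((H''.neighborSet x).toFinite.toFinset).map
              ⟨Sum.inr, Sum.inr_injective⟩ := by
        ext z
        cases z with
        | inl a => simp [Set.Finite.mem_toFinset, SimpleGraph.neighborSet]
        | inr b => simp [Set.Finite.mem_toFinset, SimpleGraph.neighborSet]
      rw [hfin, Finset.map_val, Multiset.map_map]
      exact Multiset.map_congr rfl fun y _ => ih y

lemma crSet_sum {V₁ V₂ : Type*} [Fintype V₁] [Fintype V₂]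
    (H' : SimpleGraph V₁) (H'' : SimpleGraph V₂) :
    crSet (H' ⊕g H'') = crSet H' ∪ crSet H'' := by
  ext s
  constructor
  · rintro ⟨z, rfl⟩
    cases z with
    | inl a => exact Or.inl ⟨a, funext fun r => (crColor_sum_inl H' H'' r a).symm⟩
    | inr b => exact Or.inr ⟨b, funext fun r => (crColor_sum_inr H' H'' r b).symm⟩
  · rintro (⟨a, rfl⟩ | ⟨b, rfl⟩)
    · exact ⟨Sum.inl a, funext fun r => crColor_sum_inl H' H'' r a⟩
    · exact ⟨Sum.inr b, funext fun r => crColor_sum_inr H' H'' r b⟩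

lemma walk_prop {V : Type*} (G : SimpleGraph V) (P : V → Prop)
    (hP : ∀ a b, G.Adj a b → P a → P b) {a b : V} (w : G.Walk a b) (ha : P a) : P b := by
  induction w with
  | nil => exact ha
  | cons h _ ih => exact ih (hP _ _ h ha)

lemma spread_lemma {VG W : Type*} [Fintype VG] [Fintype W]
    (G : SimpleGraph VG) (hG : G.Connected) (H : SimpleGraph W)
    (hsub : crSet H ⊆ crSet G) (hex : ∃ x : VG, crSeq G x ∈ crSet H) :
    crSet G ⊆ crSet H := by
  obtain ⟨x0, hx0⟩ := hex
  rintro s ⟨x, rfl⟩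
  have step : ∀ a b, G.Adj a b → crSeq G a ∈ crSet H → crSeq G b ∈ crSet H := by
    rintro a b hab ⟨u, hu⟩
    obtain ⟨v, _, hv⟩ := neighbor_transfer G H hab hu.symm
    exact ⟨v, hv.symm⟩
  obtain ⟨w⟩ := (hG.preconnected x0 x)
  exact walk_prop G (fun z => crSeq G z ∈ crSet H) step w hx0


/-- If `G` is connected and CR-similar to a disjoint union `H' + H''` of two
nonempty graphs, then `G` is CR-similar to `H'` and to `H''`. -/
theorem stmt_10 {VG V₁ V₂ : Type*} [Fintype VG] [Fintype V₁] [Fintype V₂]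
    [Nonempty V₁] [Nonempty V₂]
    (G : SimpleGraph VG) (H' : SimpleGraph V₁) (H'' : SimpleGraph V₂)
    (hG : G.Connected) (h : crSet G = crSet (H' ⊕g H'')) :
    crSet G = crSet H' ∧ crSet G = crSet H'' := by
  rw [crSet_sum] at h
  have h1sub : crSet H' ⊆ crSet G := h ▸ Set.subset_union_left
  have h2sub : crSet H'' ⊆ crSet G := h ▸ Set.subset_union_right
  have ex1 : ∃ x : VG, crSeq G x ∈ crSet H' := by
    obtain ⟨a⟩ := ‹Nonempty V₁›
    obtain ⟨x, hx⟩ := h1sub ⟨a, rfl⟩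
    exact ⟨x, hx ▸ ⟨a, rfl⟩⟩
  have ex2 : ∃ x : VG, crSeq G x ∈ crSet H'' := by
    obtain ⟨b⟩ := ‹Nonempty V₂›
    obtain ⟨x, hx⟩ := h2sub ⟨b, rfl⟩
    exact ⟨x, hx ▸ ⟨b, rfl⟩⟩
  have e1 : crSet G ⊆ crSet H' := spread_lemma G hG H' h1sub ex1
  have e2 : crSet G ⊆ crSet H'' := spread_lemma G hG H'' h2sub ex2
  exact ⟨Set.Subset.antisymm e1 h1sub, Set.Subset.antisymm e2 h2sub⟩
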